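/- Under assumptions (C1)-(C3), if u_ε → u_0 strongly in L^∞((0,∞);U), then the controlled states w_ε(t) = ∫_0^t T^ε_{t-σ} B u_ε(σ) dσ converge to w_0 in C([0,τ];X) for every τ > 0. -/

import Mathlib

open MeasureTheory Filter Asymptotics

/-- Cauchy–Schwarz for a nonnegative symmetric bilinear form. -/
lemma form_cs' {X : Type*} [AddCommGroup X] [Module ℝ X] (b : X → X → ℝ)
    (hadd : ∀ x y z, b (x + y) z = b x z + b y z)
    (hsmul : ∀ (c : ℝ) (x y : X), b (c • x) y = c * b x y)
    (hsymm : ∀ x y, b x y = b y x)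
    (hnn : ∀ x, 0 ≤ b x x) (x y : X) : b x y ^ 2 ≤ b x x * b y y := by
  have key : ∀ t : ℝ, 0 ≤ b y y * (t * t) + (2 * b x y) * t + b x x := by
    intro t
    have h0 := hnn (x + t • y)
    have e1 : b (x + t • y) (x + t • y)
        = b x x + t * b y x + (t * b x y + t * (t * b y y)) := by
      rw [hadd, hsmul, hsymm x (x + t • y), hadd, hsmul, hsymm y (x + t • y), hadd, hsmul]
      ring
    rw [e1, hsymm y x] at h0
    nlinarith [h0]
  have hd := discrim_le_zero key
  rw [discrim] at hd
  nlinarith [hd]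

/-- Product rule for `σ' ↦ S (s - σ') (g σ')` where `S` is a strongly continuous
contraction family on `[0, ∞)`. -/
lemma hasDerivAt_shift_apply {X : Type*} [NormedAddCommGroup X] [NormedSpace ℝ X]
    (S : ℝ → X →L[ℝ] X) (g : ℝ → X) (g' : X) {s σ : ℝ} (hσs : σ < s)
    (hcontr : ∀ r, 0 ≤ r → ‖S r‖ ≤ 1)
    (hScont : Continuous fun r => S r g')
    (hg : HasDerivAt g g' σ)
    (D : X) (hD : HasDerivAt (fun σ' => S (s - σ') (g σ)) D σ) :
    HasDerivAt (fun σ' => S (s - σ') (g σ')) (S (s - σ) g' + D) σ := by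
  have hA : HasDerivAt (fun σ' => S (s - σ') (g σ' - g σ - (σ' - σ) • g')) 0 σ := by
    rw [hasDerivAt_iff_isLittleO]
    have hval : g σ - g σ - (σ - σ) • g' = 0 := by simp
    refine IsBigO.trans_isLittleO ?_ (hasDerivAt_iff_isLittleO.mp hg)
    rw [Asymptotics.isBigO_iff]
    refine ⟨1, ?_⟩
    have hev : ∀ᶠ σ' in nhds σ, σ' < s := Filter.Tendsto.eventually_lt_const hσs tendsto_id
    filter_upwards [hev] with σ' hσ'
    have h1 : ‖S (s - σ') (g σ' - g σ - (σ' - σ) • g')‖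
        ≤ 1 * ‖g σ' - g σ - (σ' - σ) • g'‖ :=
      (S (s - σ')).le_of_opNorm_le (hcontr _ (by linarith)) _
    simpa [hval] using h1
  have hB : HasDerivAt (fun σ' => (σ' - σ) • (S (s - σ') g')) (S (s - σ) g') σ := by
    rw [hasDerivAt_iff_isLittleO]
    have : (fun σ' => (σ' - σ) • S (s - σ') g' - (σ - σ) • S (s - σ) g'
        - (σ' - σ) • S (s - σ) g') = fun σ' => (σ' - σ) • (S (s - σ') g' - S (s - σ) g') := by
      funext σ'; simp [smul_sub]
    rw [this]
    rw [Asymptotics.isLittleO_iff]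
    intro c hc
    have htd : Tendsto (fun σ' : ℝ => S (s - σ') g') (nhds σ) (nhds (S (s - σ) g')) := by
      exact (hScont.comp (continuous_const.sub continuous_id)).tendsto σ
    filter_upwards [Metric.tendsto_nhds.mp htd c hc] with σ' h
    rw [dist_eq_norm] at h
    rw [norm_smul, Real.norm_eq_abs, mul_comm c]
    exact mul_le_mul_of_nonneg_left h.le (abs_nonneg _)
  have hsum := (hA.add hB).add hD
  have heq : (fun σ' => S (s - σ') (g σ')) = fun σ' =>
      (S (s - σ') (g σ' - g σ - (σ' - σ) • g') + (σ' - σ) • (S (s - σ') g')) + S (s - σ') (g σ) := by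
    funext σ'
    simp only [map_sub, ContinuousLinearMap.map_smul]
    abel
  rw [heq]
  rw [zero_add] at hsum; exact hsum

/-- Strong convergence + uniform bound gives uniform convergence on compacts. -/
lemma unif_compact {ι X : Type*} [NormedAddCommGroup X] [NormedSpace ℝ X]
    {l : Filter ι} (R : ι → X →L[ℝ] X) (R₀ : X →L[ℝ] X) (M : ℝ)
    (hb : ∀ᶠ i in l, ∀ x, ‖R i x‖ ≤ M * ‖x‖)
    (hconv : ∀ x, Tendsto (fun i => R i x) l (nhds (R₀ x)))
    {K : Set X} (hK : IsCompact K) {δ : ℝ} (hδ : 0 < δ) :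
    ∀ᶠ i in l, ∀ x ∈ K, ‖R i x - R₀ x‖ ≤ δ := by
  set M' : ℝ := |M| + ‖R₀‖ + 1 with hM'
  have hM'pos : 0 < M' := by positivity
  set r : ℝ := δ / (2 * M') with hr
  have hrpos : 0 < r := by positivity
  obtain ⟨t, ht⟩ := hK.elim_finite_subcover (fun y : X => Metric.ball y r)
    (fun y => Metric.isOpen_ball) (fun x hx => Set.mem_iUnion.mpr ⟨x, Metric.mem_ball_self hrpos⟩)
  have hev : ∀ᶠ i in l, ∀ y ∈ t, ‖R i y - R₀ y‖ ≤ δ / 2 := by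
    rw [Filter.eventually_all_finset]
    intro y _
    filter_upwards [Metric.tendsto_nhds.mp (hconv y) (δ / 2) (by positivity)] with i h
    rw [dist_eq_norm] at h; exact h.le
  filter_upwards [hev, hb] with i h1 h2 x hx
  obtain ⟨y, hyt, hxy⟩ : ∃ y ∈ t, x ∈ Metric.ball y r := by
    have := ht hx; simpa using this
  have hxy' : ‖x - y‖ < r := by rwa [Metric.mem_ball, dist_eq_norm] at hxy
  have e1 : ‖R i (x - y)‖ ≤ |M| * r := by
    calc ‖R i (x - y)‖ ≤ M * ‖x - y‖ := h2 _
      _ ≤ |M| * ‖x - y‖ := by nlinarith [norm_nonneg (x - y), le_abs_self M]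
      _ ≤ |M| * r := by nlinarith [abs_nonneg M]
  have e2 : ‖R₀ (x - y)‖ ≤ ‖R₀‖ * r :=
    (R₀.le_opNorm _).trans (by nlinarith [norm_nonneg R₀])
  have e3 : R i x - R₀ x = R i (x - y) + (R i y - R₀ y) - R₀ (x - y) := by
    rw [map_sub, map_sub]; abel
  rw [e3]
  calc ‖R i (x - y) + (R i y - R₀ y) - R₀ (x - y)‖
      ≤ ‖R i (x - y) + (R i y - R₀ y)‖ + ‖R₀ (x - y)‖ := norm_sub_le _ _
    _ ≤ ‖R i (x - y)‖ + ‖R i y - R₀ y‖ + ‖R₀ (x - y)‖ :=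
        add_le_add_left (norm_add_le _ _) _
    _ ≤ |M| * r + δ / 2 + ‖R₀‖ * r := add_le_add (add_le_add e1 (h1 y hyt)) e2
    _ ≤ δ := by
        have : (|M| + ‖R₀‖) * r ≤ M' * r := by nlinarith
        have hMr : M' * r = δ / 2 := by rw [hr]; field_simp
        nlinarith



open MeasureTheory Filter
open scoped RealInnerProductSpace

set_option maxHeartbeats 1600000 in
/-- **Statement 2.** Under assumptions (C1)-(C3) on the family `(A_ε)` (self-adjoint operators
with common domain `X₁` compactly embedded in `X`, uniform comparability with the strictly
positive `A₀`, and strong resolvent convergence), if `u_ε → u_0` strongly in `L^∞((0,∞);U)`,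
then the controlled states `w_ε(t) = ∫_0^t T^ε_{t-σ} B u_ε(σ) dσ` converge to `w_0`
in `C([0,τ];X)` for every `τ > 0`. -/
theorem stmt4 {X X₁ U : Type*}
    [NormedAddCommGroup X] [InnerProductSpace ℝ X] [CompleteSpace X]
    [NormedAddCommGroup X₁] [NormedSpace ℝ X₁]
    [NormedAddCommGroup U] [InnerProductSpace ℝ U] [CompleteSpace U]
    -- (C1): common domain `X₁` compactly embedded in `X`, each `A_ε` self-adjoint
    (ι : X₁ →L[ℝ] X) (hι_inj : Function.Injective ι) (hι_cpt : IsCompactOperator ι)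
    (A : ℝ → X₁ →L[ℝ] X)
    (hsa : ∀ ε : ℝ, 0 ≤ ε → ∀ ψ φ : X₁, ⟪A ε ψ, ι φ⟫ = ⟪ι ψ, A ε φ⟫)
    -- (C2): `A₀` strictly positive and `m₀⟨A₀ψ,ψ⟩ ≤ ⟨A_εψ,ψ⟩ ≤ m₁⟨A₀ψ,ψ⟩`
    (m₀ m₁ : ℝ) (hm₀ : 0 < m₀) (hm₁ : 0 < m₁)
    (hpos : ∀ ψ : X₁, ψ ≠ 0 → 0 < ⟪A 0 ψ, ι ψ⟫)
    (hcomp : ∀ ε : ℝ, 0 ≤ ε → ∀ ψ : X₁,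
      m₀ * ⟪A 0 ψ, ι ψ⟫ ≤ ⟪A ε ψ, ι ψ⟫ ∧ ⟪A ε ψ, ι ψ⟫ ≤ m₁ * ⟪A 0 ψ, ι ψ⟫)
    -- (C3): strong convergence of the resolvents `A_ε⁻¹ψ → A₀⁻¹ψ`
    (Ainv : ℝ → X →L[ℝ] X₁)
    (hAinv : ∀ ε : ℝ, 0 ≤ ε → (∀ x : X, A ε (Ainv ε x) = x) ∧ ∀ ψ : X₁, Ainv ε (A ε ψ) = ψ)
    (hres : ∀ x : X, Tendsto (fun ε => ι (Ainv ε x)) (nhdsWithin 0 (Set.Ioi 0))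
      (nhds (ι (Ainv 0 x))))
    -- `T^ε` is the contraction semigroup generated by `-A_ε`
    (T : ℝ → ℝ → X →L[ℝ] X)
    (hT0 : ∀ ε : ℝ, 0 ≤ ε → T ε 0 = 1)
    (hTadd : ∀ ε : ℝ, 0 ≤ ε → ∀ s t : ℝ, 0 ≤ s → 0 ≤ t → T ε (s + t) = (T ε s).comp (T ε t))
    (hTcont : ∀ ε : ℝ, 0 ≤ ε → ∀ x : X, Continuous fun t => T ε t x)
    (hTcontr : ∀ ε : ℝ, 0 ≤ ε → ∀ t : ℝ, 0 ≤ t → ‖T ε t‖ ≤ 1)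
    (hgen : ∀ ε : ℝ, 0 ≤ ε → ∀ ψ : X₁, ∀ t : ℝ, 0 ≤ t →
      HasDerivAt (fun s => T ε s (ι ψ)) (-(T ε t (A ε ψ))) t)
    -- control operator `B` and controls `u_ε → u_0` strongly in `L^∞((0,∞);U)`
    (B : U →L[ℝ] X) (u : ℝ → ℝ → U)
    (hu_mem : ∀ ε : ℝ, 0 ≤ ε → MemLp (u ε) ⊤ (volume.restrict (Set.Ioi 0)))
    (hu_conv : Tendsto (fun ε => eLpNorm (fun t => u ε t - u 0 t) ⊤
      (volume.restrict (Set.Ioi 0))) (nhdsWithin 0 (Set.Ioi 0)) (nhds 0)) :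
    ∀ τ : ℝ, 0 < τ →
      TendstoUniformlyOn
        (fun ε t => ∫ σ in Set.Ioc 0 t, T ε (t - σ) (B (u ε σ)))
        (fun t => ∫ σ in Set.Ioc 0 t, T 0 (t - σ) (B (u 0 σ)))
        (nhdsWithin 0 (Set.Ioi 0)) (Set.Icc 0 τ) := by
  intro τ hτ
  classical
  obtain ⟨R, hRdef⟩ : ∃ R : ℝ → X →L[ℝ] X, R = fun ε => ι.comp (Ainv ε) := ⟨_, rfl⟩
  have hRapp : ∀ (ε : ℝ) (x : X), R ε x = ι (Ainv ε x) := by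
    intro ε x; rw [hRdef]; rfl
  have hpos0 : ∀ ψ : X₁, 0 ≤ ⟪A 0 ψ, ι ψ⟫ := by
    intro ψ
    rcases eq_or_ne ψ 0 with h | h
    · simp [h]
    · exact (hpos ψ h).le
  have hsymmR : ∀ ε, 0 ≤ ε → ∀ x y : X, ⟪R ε x, y⟫ = ⟪x, R ε y⟫ := by
    intro ε hε x y
    have h1 : y = A ε (Ainv ε y) := ((hAinv ε hε).1 y).symm
    have h2 : x = A ε (Ainv ε x) := ((hAinv ε hε).1 x).symm
    calc ⟪R ε x, y⟫ = ⟪ι (Ainv ε x), A ε (Ainv ε y)⟫ := by rw [hRapp, ← h1]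
      _ = ⟪A ε (Ainv ε x), ι (Ainv ε y)⟫ := (hsa ε hε _ _).symm
      _ = ⟪x, R ε y⟫ := by rw [hRapp, ← h2]
  have hposR : ∀ ε, 0 ≤ ε → ∀ x : X, 0 ≤ ⟪x, R ε x⟫ := by
    intro ε hε x
    set ψ := Ainv ε x with hψ
    have hx : A ε ψ = x := (hAinv ε hε).1 x
    have he : ⟪x, R ε x⟫ = ⟪A ε ψ, ι ψ⟫ := by
      rw [hRapp, ← hx, (hAinv ε hε).2 ψ]
    rw [he]
    have := (hcomp ε hε ψ).1
    nlinarith [hpos0 ψ, hm₀.le]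
  obtain ⟨M, hMdef⟩ : ∃ M : ℝ, M = m₁ * ‖R 0‖ / m₀ ^ 2 + 1 := ⟨_, rfl⟩
  have hMpos : 0 < M := by rw [hMdef]; positivity
  have hq : ∀ ε, 0 ≤ ε → ∀ x : X,
      m₀ ^ 2 * ⟪A 0 (Ainv ε x), ι (Ainv ε x)⟫ ≤ ‖R 0‖ * ‖x‖ ^ 2 := by
    intro ε hε x
    set ψ := Ainv ε x with hψ
    set q : ℝ := ⟪A 0 ψ, ι ψ⟫ with hqd
    have hq0 : 0 ≤ q := hpos0 ψ
    have hstepi : ‖ι ψ‖ ^ 2 ≤ ‖R 0‖ * q := by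
      have hb2' := form_cs' (fun ψ φ : X₁ => ⟪A 0 ψ, ι φ⟫)
        (fun x y z => by
          show ⟪A 0 (x + y), ι z⟫ = ⟪A 0 x, ι z⟫ + ⟪A 0 y, ι z⟫
          rw [map_add, inner_add_left])
        (fun c x y => by
          show ⟪A 0 (c • x), ι y⟫ = c * ⟪A 0 x, ι y⟫
          rw [_root_.map_smul, real_inner_smul_left])
        (fun x y => by
          show ⟪A 0 x, ι y⟫ = ⟪A 0 y, ι x⟫
          rw [hsa 0 le_rfl, real_inner_comm])
        hpos0 (Ainv 0 (ι ψ)) ψ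
      have hb2 : ⟪A 0 (Ainv 0 (ι ψ)), ι ψ⟫ ^ 2
          ≤ ⟪A 0 (Ainv 0 (ι ψ)), ι (Ainv 0 (ι ψ))⟫ * ⟪A 0 ψ, ι ψ⟫ := hb2'
      have he1 : ⟪A 0 (Ainv 0 (ι ψ)), ι ψ⟫ = ‖ι ψ‖ ^ 2 := by
        rw [(hAinv 0 le_rfl).1 (ι ψ)]; exact real_inner_self_eq_norm_sq _
      have he2 : ⟪A 0 (Ainv 0 (ι ψ)), ι (Ainv 0 (ι ψ))⟫ ≤ ‖R 0‖ * ‖ι ψ‖ ^ 2 := by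
        rw [(hAinv 0 le_rfl).1 (ι ψ)]
        calc ⟪ι ψ, ι (Ainv 0 (ι ψ))⟫ = ⟪ι ψ, R 0 (ι ψ)⟫ := by rw [hRapp]
          _ ≤ ‖ι ψ‖ * ‖R 0 (ι ψ)‖ := real_inner_le_norm _ _
          _ ≤ ‖ι ψ‖ * (‖R 0‖ * ‖ι ψ‖) :=
              mul_le_mul_of_nonneg_left ((R 0).le_opNorm _) (norm_nonneg _)
          _ = ‖R 0‖ * ‖ι ψ‖ ^ 2 := by ring
      rcases eq_or_ne (‖ι ψ‖) 0 with h0 | h0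
      · rw [h0]; nlinarith [norm_nonneg (R 0)]
      · have hlt : 0 < ‖ι ψ‖ := lt_of_le_of_ne (norm_nonneg _) (Ne.symm h0)
        rw [he1] at hb2
        nlinarith [hb2, mul_le_mul_of_nonneg_right he2 hq0, hlt, mul_pos hlt hlt]
    have hstepii : m₀ * q ≤ ‖x‖ * ‖ι ψ‖ := by
      have hc := (hcomp ε hε ψ).1
      have hx : A ε ψ = x := (hAinv ε hε).1 x
      calc m₀ * q ≤ ⟪A ε ψ, ι ψ⟫ := hc
        _ = ⟪x, ι ψ⟫ := by rw [hx]
        _ ≤ ‖x‖ * ‖ι ψ‖ := real_inner_le_norm _ _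
    rcases eq_or_ne q 0 with h0 | h0
    · rw [h0]; nlinarith [norm_nonneg (R 0), sq_nonneg ‖x‖]
    · have hqlt : 0 < q := lt_of_le_of_ne hq0 (Ne.symm h0)
      nlinarith [hstepi, hstepii, mul_le_mul hstepii hstepii (by positivity)
        (by positivity), mul_le_mul_of_nonneg_left hstepi (sq_nonneg ‖x‖), hqlt]
  have hformR : ∀ ε, 0 ≤ ε → ∀ x : X, ⟪x, R ε x⟫ ≤ M * ‖x‖ ^ 2 := by
    intro ε hε x
    set ψ := Ainv ε x with hψ
    have hx : A ε ψ = x := (hAinv ε hε).1 x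
    have he : ⟪x, R ε x⟫ = ⟪A ε ψ, ι ψ⟫ := by
      rw [hRapp, ← hx, (hAinv ε hε).2 ψ]
    have h1 : ⟪A ε ψ, ι ψ⟫ ≤ m₁ * ⟪A 0 ψ, ι ψ⟫ := (hcomp ε hε ψ).2
    have h2 := hq ε hε x
    rw [he]
    have hn : 0 ≤ ‖x‖ ^ 2 := sq_nonneg _
    rw [hMdef]
    rw [div_add' _ _ _ (by positivity)]
    rw [div_mul_eq_mul_div, le_div_iff₀ (by positivity)]
    nlinarith [hpos0 ψ]
  have hRb : ∀ ε, 0 ≤ ε → ∀ x : X, ‖R ε x‖ ≤ M * ‖x‖ := by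
    intro ε hε x
    have hb1' := form_cs' (fun x y : X => ⟪x, R ε y⟫)
      (fun x y z => by
        show ⟪x + y, R ε z⟫ = ⟪x, R ε z⟫ + ⟪y, R ε z⟫
        rw [inner_add_left])
      (fun c x y => by
        show ⟪c • x, R ε y⟫ = c * ⟪x, R ε y⟫
        rw [real_inner_smul_left])
      (fun x y => by
        show ⟪x, R ε y⟫ = ⟪y, R ε x⟫
        rw [← hsymmR ε hε, real_inner_comm])
      (fun x => hposR ε hε x) (R ε x) x
    have hb1 : ⟪R ε x, R ε x⟫ ^ 2 ≤ ⟪R ε x, R ε (R ε x)⟫ * ⟪x, R ε x⟫ := hb1'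
    have h2 : ⟪R ε x, R ε x⟫ = ‖R ε x‖ ^ 2 := real_inner_self_eq_norm_sq _
    have h3 := hformR ε hε (R ε x)
    have h4 := hformR ε hε x
    simp only [h2] at hb1
    have key : ‖R ε x‖ ^ 2 ≤ (M * ‖x‖) ^ 2 := by
      rcases eq_or_ne (‖R ε x‖) 0 with h0 | h0
      · rw [h0]; simpa using sq_nonneg (M * ‖x‖)
      · have hlt : 0 < ‖R ε x‖ := lt_of_le_of_ne (norm_nonneg _) (Ne.symm h0)
        nlinarith [hb1, h3, h4, hposR ε hε x, hposR ε hε (R ε x), sq_nonneg ‖x‖]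
    exact (pow_le_pow_iff_left₀ (norm_nonneg _) (by positivity) (by norm_num)).mp key
  have hTle : ∀ ε, 0 ≤ ε → ∀ t, 0 ≤ t → ∀ x : X, ‖T ε t x‖ ≤ ‖x‖ := by
    intro ε hε t ht x
    have := (T ε t).le_of_opNorm_le (hTcontr ε hε t ht) x
    simpa using this
  have hT0app : ∀ ε, 0 ≤ ε → ∀ x : X, T ε 0 x = x := by
    intro ε hε x; rw [hT0 ε hε]; rfl
  -- density of the range of `R 0 ∘ R 0`
  have hdense : ∀ x : X, ∀ δ : ℝ, 0 < δ → ∃ y : X, ‖x - R 0 (R 0 y)‖ < δ := by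
    intro x δ hδ
    have horth : (LinearMap.range (R 0 : X →ₗ[ℝ] X))ᗮ = ⊥ := by
      rw [Submodule.eq_bot_iff]
      intro z hz
      have hz' : ∀ y : X, ⟪R 0 y, z⟫ = 0 := fun y =>
        (Submodule.mem_orthogonal _ _).mp hz (R 0 y) ⟨y, rfl⟩
      have hR0z : R 0 z = 0 := by
        have h1 : ⟪R 0 z, R 0 z⟫ = 0 := by
          rw [hsymmR 0 le_rfl, real_inner_comm]
          exact hz' (R 0 z)
        exact inner_self_eq_zero.mp h1
      have h2 : Ainv 0 z = 0 := by
        apply hι_inj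
        rw [map_zero, ← hRapp]
        exact hR0z
      have h3 := (hAinv 0 le_rfl).1 z
      rw [h2, map_zero] at h3
      exact h3.symm
    have hd : Dense ((LinearMap.range (R 0 : X →ₗ[ℝ] X) : Submodule ℝ X) : Set X) := by
      rw [Submodule.dense_iff_topologicalClosure_eq_top]
      exact Submodule.topologicalClosure_eq_top_iff.mpr horth
    obtain ⟨u', hu'1, hu'2⟩ := Metric.mem_closure_iff.mp (hd x) (δ / 2) (by positivity)
    obtain ⟨v, hv⟩ := hu'1
    obtain ⟨w', hw'1, hw'2⟩ := Metric.mem_closure_iff.mp (hd v) (δ / 2 / M) (div_pos (by linarith) hMpos)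
    obtain ⟨y, hy⟩ := hw'1
    refine ⟨y, ?_⟩
    have e1 : ‖x - R 0 v‖ < δ / 2 := by rw [← hv] at hu'2; rw [← dist_eq_norm]; exact hu'2
    have e2 : ‖v - R 0 y‖ < δ / 2 / M := by rw [← hy] at hw'2; rw [← dist_eq_norm]; exact hw'2
    have e3 : ‖R 0 v - R 0 (R 0 y)‖ ≤ M * ‖v - R 0 y‖ := by
      rw [← map_sub]; exact hRb 0 le_rfl _
    calc ‖x - R 0 (R 0 y)‖ ≤ ‖x - R 0 v‖ + ‖R 0 v - R 0 (R 0 y)‖ := norm_sub_le_norm_sub_add_norm_sub _ _ _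
      _ < δ / 2 + M * (δ / 2 / M) := by
          have : M * ‖v - R 0 y‖ < M * (δ / 2 / M) := mul_lt_mul_of_pos_left e2 hMpos
          linarith [e3]
      _ = δ := by rw [mul_comm, div_mul_cancel₀ _ (ne_of_gt hMpos)]; ring
  -- fundamental theorem of calculus identity
  have hFTCψ : ∀ ε, 0 ≤ ε → ∀ ψ : X₁, ∀ σ, 0 ≤ σ →
      ∫ r in (0:ℝ)..σ, T ε r (A ε ψ) = ι ψ - T ε σ (ι ψ) := by
    intro ε hε ψ σ hσ
    have h1 : ∀ r ∈ Set.uIcc (0:ℝ) σ, HasDerivAt (fun s => T ε s (ι ψ)) (-(T ε r (A ε ψ))) r := by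
      intro r hr
      rw [Set.uIcc_of_le hσ] at hr
      exact hgen ε hε ψ r hr.1
    have h2 : IntervalIntegrable (fun r => -(T ε r (A ε ψ))) volume 0 σ :=
      ((hTcont ε hε (A ε ψ)).neg).intervalIntegrable 0 σ
    have h3 := intervalIntegral.integral_eq_sub_of_hasDerivAt h1 h2
    rw [intervalIntegral.integral_neg] at h3
    rw [hT0app ε hε (ι ψ)] at h3
    have h5 := congrArg Neg.neg h3
    simpa [neg_sub] using h5
  have hFTC : ∀ ε, 0 ≤ ε → ∀ z : X, ∀ σ, 0 ≤ σ →
      ∫ r in (0:ℝ)..σ, T ε r z = R ε z - T ε σ (R ε z) := by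
    intro ε hε z σ hσ
    have h := hFTCψ ε hε (Ainv ε z) σ hσ
    rw [(hAinv ε hε).1 z] at h
    simpa [hRapp] using h
  -- the resolvent commutes with the semigroup
  have hcomm : ∀ ε, 0 ≤ ε → ∀ σ, 0 ≤ σ → ∀ z : X, R ε (T ε σ z) = T ε σ (R ε z) := by
    intro ε hε σ hσ z
    have hTw : ∀ s, 0 ≤ s →
        T ε s (R ε (T ε σ z)) - T ε s (T ε σ (R ε z)) = R ε (T ε σ z) - T ε σ (R ε z) := by
      intro s hs
      have ha := hFTC ε hε (T ε σ z) s hs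
      have hb : ∫ r in (0:ℝ)..s, T ε r (T ε σ z)
          = T ε σ (R ε z) - T ε s (T ε σ (R ε z)) := by
        have hcv : Set.EqOn (fun r => T ε r (T ε σ z)) (fun r => T ε (r + σ) z)
            (Set.uIcc 0 s) := by
          intro r hr
          rw [Set.uIcc_of_le hs] at hr
          show T ε r (T ε σ z) = T ε (r + σ) z
          rw [hTadd ε hε r σ hr.1 hσ]; rfl
        rw [intervalIntegral.integral_congr hcv,
          intervalIntegral.integral_comp_add_right (fun r => T ε r z) σ, zero_add]
        have i1 : IntervalIntegrable (fun r => T ε r z) volume 0 σ :=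
          (hTcont ε hε z).intervalIntegrable 0 σ
        have i2 : IntervalIntegrable (fun r => T ε r z) volume σ (s + σ) :=
          (hTcont ε hε z).intervalIntegrable σ (s + σ)
        have hadj := intervalIntegral.integral_add_adjacent_intervals i1 i2
        have h0σ := hFTC ε hε z σ hσ
        have h0sσ := hFTC ε hε z (s + σ) (by linarith)
        have hsum : T ε (s + σ) (R ε z) = T ε s (T ε σ (R ε z)) := by
          rw [hTadd ε hε s σ hs hσ]; rfl
        rw [h0σ, h0sσ, hsum] at hadj
        have : (∫ r in σ..(s + σ), T ε r z)
            = (R ε z - T ε s (T ε σ (R ε z))) - (R ε z - T ε σ (R ε z)) := by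
          rw [← hadj]; abel
        rw [this]; abel
      rw [ha] at hb
      have : T ε s (R ε (T ε σ z)) - T ε s (T ε σ (R ε z))
          = -(R ε (T ε σ z) - T ε s (R ε (T ε σ z)))
            + (R ε (T ε σ z) - T ε σ (R ε z))
            + (T ε σ (R ε z) - T ε s (T ε σ (R ε z))) := by abel
      rw [this, hb]; abel
    set w := R ε (T ε σ z) - T ε σ (R ε z) with hwdef
    have hwz : ∀ s, 0 ≤ s → s • w = R ε w - T ε s (R ε w) := by
      intro s hs
      have h1 := hFTC ε hε w s hs
      have h2 : Set.EqOn (fun r => T ε r w) (fun _ => w) (Set.uIcc 0 s) := by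
        intro r hr
        rw [Set.uIcc_of_le hs] at hr
        show T ε r w = w
        rw [hwdef, map_sub]
        exact hTw r hr.1
      rw [intervalIntegral.integral_congr h2, intervalIntegral.integral_const] at h1
      simpa using h1
    have hw0 : w = 0 := by
      by_contra hne
      have hpos' : 0 < ‖w‖ := norm_pos_iff.mpr hne
      have hs := hwz (2 * M + 1) (by linarith)
      have hn1 : ‖(2 * M + 1) • w‖ = (2 * M + 1) * ‖w‖ := by
        rw [norm_smul, Real.norm_eq_abs, abs_of_nonneg (by linarith)]
      have hn2 : ‖R ε w - T ε (2 * M + 1) (R ε w)‖ ≤ 2 * (M * ‖w‖) := by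
        calc ‖R ε w - T ε (2 * M + 1) (R ε w)‖
            ≤ ‖R ε w‖ + ‖T ε (2 * M + 1) (R ε w)‖ := norm_sub_le _ _
          _ ≤ ‖R ε w‖ + ‖R ε w‖ := by
              have := hTle ε hε (2 * M + 1) (by linarith) (R ε w)
              linarith
          _ ≤ 2 * (M * ‖w‖) := by have := hRb ε hε w; linarith
      have : (2 * M + 1) * ‖w‖ ≤ 2 * (M * ‖w‖) := by rw [← hn1, hs]; exact hn2
      nlinarith
    rwa [sub_eq_zero] at hw0
  -- joint continuity
  have hjc : ∀ ε, 0 ≤ ε → Continuous (fun p : ℝ × X => T ε (max p.1 0) p.2) := by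
    intro ε hε
    rw [continuous_iff_continuousAt]
    rintro ⟨r₀, w₀⟩
    have h1 : Continuous (fun p : ℝ × X => T ε (max p.1 0) w₀) :=
      (hTcont ε hε w₀).comp (continuous_fst.max continuous_const)
    have h2 : Tendsto (fun p : ℝ × X => T ε (max p.1 0) (p.2 - w₀))
        (nhds (r₀, w₀)) (nhds 0) := by
      have hb : ∀ p : ℝ × X, ‖T ε (max p.1 0) (p.2 - w₀)‖ ≤ ‖p.2 - w₀‖ :=
        fun p => hTle ε hε _ (le_max_right _ _) _
      have hg : Tendsto (fun p : ℝ × X => ‖p.2 - w₀‖) (nhds (r₀, w₀)) (nhds 0) := by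
        have hc : Continuous (fun p : ℝ × X => ‖p.2 - w₀‖) :=
          (continuous_snd.sub continuous_const).norm
        have := hc.tendsto (r₀, w₀)
        simpa using this
      exact squeeze_zero_norm hb hg
    have hca : ContinuousAt (fun p : ℝ × X => T ε (max p.1 0) p.2) (r₀, w₀) := by
      have hsum := h2.add (h1.tendsto (r₀, w₀))
      have heq : (fun p : ℝ × X => T ε (max p.1 0) (p.2 - w₀) + T ε (max p.1 0) w₀)
          = fun p : ℝ × X => T ε (max p.1 0) p.2 := by
        funext p; rw [← map_add]; congr 1; abel
      rw [heq] at hsum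
      rw [ContinuousAt]; simpa using hsum
    exact hca
  -- the key Duhamel-type identity
  have hident : ∀ ε, 0 ≤ ε → ∀ y : X, ∀ s, 0 ≤ s →
      R ε (T 0 s (R 0 y)) - T ε s (R ε (R 0 y))
        = ∫ σ in (0:ℝ)..s, T ε (s - σ) (R 0 (T 0 σ y) - R ε (T 0 σ y)) := by
    intro ε hε y s hs
    have hcont1 : Continuous fun σ => R ε (T 0 σ (R 0 y)) :=
      (R ε).continuous.comp (hTcont 0 le_rfl (R 0 y))
    have hcont2 : Continuous fun σ : ℝ => R 0 (T 0 σ y) - R ε (T 0 σ y) :=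
      ((R 0).continuous.comp (hTcont 0 le_rfl y)).sub
        ((R ε).continuous.comp (hTcont 0 le_rfl y))
    have hf_cont : ContinuousOn (fun σ => T ε (s - σ) (R ε (T 0 σ (R 0 y)))) (Set.Icc 0 s) := by
      have hF : Continuous fun σ => T ε (max (s - σ) 0) (R ε (T 0 σ (R 0 y))) :=
        (hjc ε hε).comp ((continuous_const.sub continuous_id).prodMk hcont1)
      refine hF.continuousOn.congr ?_
      intro σ hσ
      have : max (s - σ) 0 = s - σ := max_eq_left (by linarith [hσ.2])
      simp only [this]
    have hf'_int : IntervalIntegrable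
        (fun σ => T ε (s - σ) (R 0 (T 0 σ y) - R ε (T 0 σ y))) volume 0 s := by
      apply ContinuousOn.intervalIntegrable
      have hF : Continuous fun σ => T ε (max (s - σ) 0) (R 0 (T 0 σ y) - R ε (T 0 σ y)) :=
        (hjc ε hε).comp ((continuous_const.sub continuous_id).prodMk hcont2)
      refine hF.continuousOn.congr ?_
      intro σ hσ
      rw [Set.uIcc_of_le hs] at hσ
      have : max (s - σ) 0 = s - σ := max_eq_left (by linarith [hσ.2])
      simp only [this]
    have hderiv : ∀ σ ∈ Set.Ioo 0 s,
        HasDerivWithinAt (fun σ' => T ε (s - σ') (R ε (T 0 σ' (R 0 y))))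
          (T ε (s - σ) (R 0 (T 0 σ y) - R ε (T 0 σ y))) (Set.Ioi σ) σ := by
      intro σ hσ
      have hσ0 : (0:ℝ) ≤ σ := hσ.1.le
      have hsσ : (0:ℝ) ≤ s - σ := by linarith [hσ.2]
      -- derivative of the inner orbit
      have hg : HasDerivAt (fun σ' => R ε (T 0 σ' (R 0 y))) (R ε (-(T 0 σ y))) σ := by
        have horb : HasDerivAt (fun σ' => T 0 σ' (R 0 y)) (-(T 0 σ y)) σ := by
          have h1 := hgen 0 le_rfl (Ainv 0 y) σ hσ0
          have h2 : ι (Ainv 0 y) = R 0 y := (hRapp 0 y).symm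
          have h3 : A 0 (Ainv 0 y) = y := (hAinv 0 le_rfl).1 y
          rw [h2, h3] at h1
          exact h1
        exact (R ε).hasFDerivAt.comp_hasDerivAt σ horb
      -- derivative of the frozen part
      have hD : HasDerivAt (fun σ' => T ε (s - σ') (R ε (T 0 σ (R 0 y))))
          (T ε (s - σ) (T 0 σ (R 0 y))) σ := by
        have hχ : R ε (T 0 σ (R 0 y)) = ι (Ainv ε (T 0 σ (R 0 y))) := hRapp _ _
        have hAχ : A ε (Ainv ε (T 0 σ (R 0 y))) = T 0 σ (R 0 y) :=
          (hAinv ε hε).1 _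
        have h1 := hgen ε hε (Ainv ε (T 0 σ (R 0 y))) (s - σ) hsσ
        have h2 : HasDerivAt (fun σ' : ℝ => s - σ') (-1 : ℝ) σ := by
          simpa using (hasDerivAt_id σ).const_sub s
        have h3 := HasDerivAt.scomp σ h1 h2
        simp only [Function.comp_def] at h3
        rw [hAχ] at h3
        have h4 : (-1 : ℝ) • -(T ε (s - σ)) (T 0 σ (R 0 y)) = T ε (s - σ) (T 0 σ (R 0 y)) := by
          simp
        rw [h4] at h3
        rw [hχ]
        exact h3
      have hmain := hasDerivAt_shift_apply (T ε) (fun σ' => R ε (T 0 σ' (R 0 y)))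
        (R ε (-(T 0 σ y))) hσ.2 (fun r hr => hTcontr ε hε r hr)
        (hTcont ε hε _) hg _ hD
      have heq : T ε (s - σ) (R ε (-(T 0 σ y))) + T ε (s - σ) (T 0 σ (R 0 y))
          = T ε (s - σ) (R 0 (T 0 σ y) - R ε (T 0 σ y)) := by
        rw [← map_add, map_neg]
        congr 1
        rw [hcomm 0 le_rfl σ hσ0 y]
        abel
      rw [heq] at hmain
      exact hmain.hasDerivWithinAt
    have hkey := intervalIntegral.integral_eq_sub_of_hasDeriv_right_of_le hs hf_cont hderiv hf'_int
    rw [hkey]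
    have e1 : T ε (s - s) (R ε (T 0 s (R 0 y))) = R ε (T 0 s (R 0 y)) := by
      rw [sub_self]; exact hT0app ε hε _
    have e2 : T ε (s - 0) (R ε (T 0 0 (R 0 y))) = T ε s (R ε (R 0 y)) := by
      rw [sub_zero, hT0app 0 le_rfl]
    rw [e1, e2]
  -- pointwise Trotter–Kato convergence, uniform on [0, τ]
  have hTK : ∀ x : X, ∀ δ : ℝ, 0 < δ →
      ∀ᶠ ε in nhdsWithin (0:ℝ) (Set.Ioi 0), ∀ s ∈ Set.Icc (0:ℝ) τ,
        ‖T ε s x - T 0 s x‖ ≤ δ := by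
    intro x δ hδ
    obtain ⟨y, hy⟩ := hdense x (δ / 4) (by positivity)
    have hK1 : IsCompact ((fun σ => T 0 σ y) '' Set.Icc 0 τ) :=
      isCompact_Icc.image (hTcont 0 le_rfl y)
    have hK2 : IsCompact ((fun σ => T 0 σ (R 0 y)) '' Set.Icc 0 τ) :=
      isCompact_Icc.image (hTcont 0 le_rfl (R 0 y))
    have hK : IsCompact (((fun σ => T 0 σ y) '' Set.Icc 0 τ
        ∪ (fun σ => T 0 σ (R 0 y)) '' Set.Icc 0 τ) ∪ {R 0 y}) :=
      (hK1.union hK2).union isCompact_singleton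
    obtain ⟨δ', hδ'def⟩ : ∃ d : ℝ, d = δ / (4 * (τ + 2)) := ⟨_, rfl⟩
    have hδ'pos : 0 < δ' := by rw [hδ'def]; positivity
    have hconv : ∀ z : X, Tendsto (fun ε => R ε z) (nhdsWithin (0:ℝ) (Set.Ioi 0))
        (nhds (R 0 z)) := by
      intro z
      have : (fun ε => R ε z) = fun ε => ι (Ainv ε z) := by
        funext ε; exact hRapp ε z
      rw [this, hRapp 0 z]
      exact hres z
    have hbd : ∀ᶠ ε in nhdsWithin (0:ℝ) (Set.Ioi 0), ∀ z : X, ‖R ε z‖ ≤ M * ‖z‖ := by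
      filter_upwards [self_mem_nhdsWithin] with ε hε
      exact hRb ε (le_of_lt hε)
    have hev := unif_compact R (R 0) M hbd hconv hK hδ'pos
    filter_upwards [hev, self_mem_nhdsWithin] with ε hev' hε s hsmem
    obtain ⟨hs0, hsτ⟩ := hsmem
    have hε' : (0:ℝ) ≤ ε := le_of_lt hε
    have hIb : ‖R ε (T 0 s (R 0 y)) - T ε s (R ε (R 0 y))‖ ≤ δ' * τ := by
      rw [hident ε hε' y s hs0]
      have hbound : ∀ σ ∈ Set.uIoc (0:ℝ) s,
          ‖T ε (s - σ) (R 0 (T 0 σ y) - R ε (T 0 σ y))‖ ≤ δ' := by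
        intro σ hσ
        rw [Set.uIoc_of_le hs0] at hσ
        have h1 : ‖T ε (s - σ) (R 0 (T 0 σ y) - R ε (T 0 σ y))‖
            ≤ ‖R 0 (T 0 σ y) - R ε (T 0 σ y)‖ :=
          hTle ε hε' _ (by linarith [hσ.2]) _
        have hmem : T 0 σ y ∈ ((fun σ => T 0 σ y) '' Set.Icc 0 τ
            ∪ (fun σ => T 0 σ (R 0 y)) '' Set.Icc 0 τ) ∪ {R 0 y} :=
          Or.inl (Or.inl ⟨σ, ⟨hσ.1.le, by linarith [hσ.2]⟩, rfl⟩)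
        have h2 := hev' _ hmem
        rw [norm_sub_rev] at h2
        linarith
      calc ‖∫ σ in (0:ℝ)..s, T ε (s - σ) (R 0 (T 0 σ y) - R ε (T 0 σ y))‖
          ≤ δ' * |s - 0| := intervalIntegral.norm_integral_le_of_norm_le_const hbound
        _ ≤ δ' * τ := by
            rw [sub_zero, abs_of_nonneg hs0]
            exact mul_le_mul_of_nonneg_left hsτ hδ'pos.le
    -- assemble
    have hdc : T ε s (R 0 (R 0 y)) - T 0 s (R 0 (R 0 y))
        = (T ε s (R 0 (R 0 y)) - T ε s (R ε (R 0 y)))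
          + (T ε s (R ε (R 0 y)) - R ε (T 0 s (R 0 y)))
          + (R ε (T 0 s (R 0 y)) - R 0 (T 0 s (R 0 y))) := by
      have hc := hcomm 0 le_rfl s hs0 (R 0 y)
      rw [hc]
      abel
    have hb1 : ‖T ε s (R 0 (R 0 y)) - T ε s (R ε (R 0 y))‖ ≤ δ' := by
      rw [← map_sub]
      refine (hTle ε hε' s hs0 _).trans ?_
      have hmem : R 0 y ∈ ((fun σ => T 0 σ y) '' Set.Icc 0 τ
          ∪ (fun σ => T 0 σ (R 0 y)) '' Set.Icc 0 τ) ∪ {R 0 y} := Or.inr rfl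
      have := hev' _ hmem
      rw [norm_sub_rev]
      exact this
    have hb3 : ‖R ε (T 0 s (R 0 y)) - R 0 (T 0 s (R 0 y))‖ ≤ δ' := by
      have hmem : T 0 s (R 0 y) ∈ ((fun σ => T 0 σ y) '' Set.Icc 0 τ
          ∪ (fun σ => T 0 σ (R 0 y)) '' Set.Icc 0 τ) ∪ {R 0 y} :=
        Or.inl (Or.inr ⟨s, ⟨hs0, hsτ⟩, rfl⟩)
      exact hev' _ hmem
    have hb2 : ‖T ε s (R ε (R 0 y)) - R ε (T 0 s (R 0 y))‖ ≤ δ' * τ := by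
      rw [norm_sub_rev]; exact hIb
    have hmid : ‖T ε s (R 0 (R 0 y)) - T 0 s (R 0 (R 0 y))‖ ≤ δ' * (τ + 2) := by
      rw [hdc]
      calc ‖(T ε s (R 0 (R 0 y)) - T ε s (R ε (R 0 y)))
            + (T ε s (R ε (R 0 y)) - R ε (T 0 s (R 0 y)))
            + (R ε (T 0 s (R 0 y)) - R 0 (T 0 s (R 0 y)))‖
          ≤ ‖(T ε s (R 0 (R 0 y)) - T ε s (R ε (R 0 y)))
            + (T ε s (R ε (R 0 y)) - R ε (T 0 s (R 0 y)))‖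
            + ‖R ε (T 0 s (R 0 y)) - R 0 (T 0 s (R 0 y))‖ := norm_add_le _ _
        _ ≤ ‖T ε s (R 0 (R 0 y)) - T ε s (R ε (R 0 y))‖
            + ‖T ε s (R ε (R 0 y)) - R ε (T 0 s (R 0 y))‖
            + ‖R ε (T 0 s (R 0 y)) - R 0 (T 0 s (R 0 y))‖ :=
            add_le_add_left (norm_add_le _ _) _
        _ ≤ δ' + δ' * τ + δ' := add_le_add (add_le_add hb1 hb2) hb3
        _ = δ' * (τ + 2) := by ring
    have hd' : δ' * (τ + 2) = δ / 4 := by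
      rw [hδ'def]
      field_simp
    have hfin : ‖T ε s x - T 0 s x‖
        ≤ ‖T ε s (x - R 0 (R 0 y))‖ + ‖T ε s (R 0 (R 0 y)) - T 0 s (R 0 (R 0 y))‖
          + ‖T 0 s (R 0 (R 0 y) - x)‖ := by
      have : T ε s x - T 0 s x
          = T ε s (x - R 0 (R 0 y)) + (T ε s (R 0 (R 0 y)) - T 0 s (R 0 (R 0 y)))
            + T 0 s (R 0 (R 0 y) - x) := by
        simp only [map_sub]
        abel
      rw [this]
      exact (norm_add_le _ _).trans (add_le_add_left (norm_add_le _ _) _)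
    have hc1 : ‖T ε s (x - R 0 (R 0 y))‖ ≤ δ / 4 :=
      (hTle ε hε' s hs0 _).trans hy.le
    have hc3 : ‖T 0 s (R 0 (R 0 y) - x)‖ ≤ δ / 4 := by
      refine (hTle 0 le_rfl s hs0 _).trans ?_
      rw [norm_sub_rev]
      exact hy.le
    rw [hd'] at hmid
    linarith
  -- ===== final assembly =====
  have hμfin : ∀ t : ℝ, IsFiniteMeasure (volume.restrict (Set.Ioc (0:ℝ) t)) := by
    intro t
    constructor
    rw [Measure.restrict_apply_univ, Real.volume_Ioc]
    exact ENNReal.ofReal_lt_top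
  have hvol_le : ∀ t, 0 ≤ t → t ≤ τ → (volume (Set.Ioc (0:ℝ) t)).toReal ≤ τ := by
    intro t h1 h2
    rw [Real.volume_Ioc, sub_zero, ENNReal.toReal_ofReal h1]
    exact h2
  have haesm : ∀ ε', 0 ≤ ε' → ∀ v : ℝ → U,
      AEStronglyMeasurable v (volume.restrict (Set.Ioi 0)) → ∀ t : ℝ,
      AEStronglyMeasurable (fun σ => T ε' (t - σ) (B (v σ)))
        (volume.restrict (Set.Ioc 0 t)) := by
    intro ε' hε' v hv t
    have hv' : AEStronglyMeasurable v (volume.restrict (Set.Ioc 0 t)) :=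
      hv.mono_measure (Measure.restrict_mono Set.Ioc_subset_Ioi_self le_rfl)
    have hpair : AEStronglyMeasurable (fun σ => ((t - σ : ℝ), B (v σ)))
        (volume.restrict (Set.Ioc 0 t)) :=
      ((continuous_const.sub continuous_id).aestronglyMeasurable).prodMk
        (B.continuous.comp_aestronglyMeasurable hv')
    have h1 := (hjc ε' hε').comp_aestronglyMeasurable hpair
    refine h1.congr ?_
    filter_upwards [ae_restrict_mem measurableSet_Ioc] with σ hσ
    show T ε' (max (t - σ) 0) (B (v σ)) = T ε' (t - σ) (B (v σ))
    rw [max_eq_left (by linarith [hσ.2])]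
  have hInt : ∀ ε', 0 ≤ ε' → ∀ v : ℝ → U,
      AEStronglyMeasurable v (volume.restrict (Set.Ioi 0)) → ∀ C : ℝ,
      (∀ᵐ σ ∂(volume.restrict (Set.Ioi (0:ℝ))), ‖v σ‖ ≤ C) → ∀ t, 0 ≤ t →
      Integrable (fun σ => T ε' (t - σ) (B (v σ))) (volume.restrict (Set.Ioc 0 t)) := by
    intro ε' hε' v hv C hC t ht
    haveI := hμfin t
    refine Integrable.mono' (integrable_const (‖B‖ * C)) (haesm ε' hε' v hv t) ?_
    have hC' : ∀ᵐ σ ∂(volume.restrict (Set.Ioc (0:ℝ) t)), ‖v σ‖ ≤ C :=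
      ae_mono (Measure.restrict_mono Set.Ioc_subset_Ioi_self le_rfl) hC
    filter_upwards [hC', ae_restrict_mem measurableSet_Ioc] with σ h1 h2
    calc ‖T ε' (t - σ) (B (v σ))‖ ≤ ‖B (v σ)‖ := hTle ε' hε' _ (by linarith [h2.2]) _
      _ ≤ ‖B‖ * ‖v σ‖ := B.le_opNorm _
      _ ≤ ‖B‖ * C := mul_le_mul_of_nonneg_left h1 (norm_nonneg _)
  have hae_bound : ∀ v : ℝ → U, eLpNorm v ⊤ (volume.restrict (Set.Ioi 0)) ≠ ⊤ →
      ∀ᵐ σ ∂(volume.restrict (Set.Ioi (0:ℝ))),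
        ‖v σ‖ ≤ (eLpNorm v ⊤ (volume.restrict (Set.Ioi 0))).toReal := by
    intro v hv
    filter_upwards [ae_le_eLpNormEssSup (f := v)] with σ h
    rw [eLpNorm_exponent_top] at hv
    have h2 := ENNReal.toReal_mono hv h
    simpa [eLpNorm_exponent_top] using h2
  rw [Metric.tendstoUniformlyOn_iff]
  intro δ hδ
  haveI := hμfin τ
  have hu0τ : MemLp (u 0) ⊤ (volume.restrict (Set.Ioc 0 τ)) :=
    (hu_mem 0 le_rfl).mono_measure (Measure.restrict_mono Set.Ioc_subset_Ioi_self le_rfl)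
  have hu01 : MemLp (u 0) 1 (volume.restrict (Set.Ioc 0 τ)) :=
    hu0τ.mono_exponent le_top
  obtain ⟨η, hηdef⟩ : ∃ η : ℝ, η = δ / (8 * (‖B‖ + 1)) := ⟨_, rfl⟩
  have hηpos : 0 < η := by rw [hηdef]; positivity
  obtain ⟨g, hg1, hg2⟩ := hu01.exists_simpleFunc_eLpNorm_sub_lt (by norm_num)
    (ε := ENNReal.ofReal η) (by simp only [ne_eq, ENNReal.ofReal_eq_zero, not_le]; exact hηpos)
  have hgint : Integrable (⇑g) (volume.restrict (Set.Ioc 0 τ)) :=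
    memLp_one_iff_integrable.mp hg2
  have hu0int : Integrable (u 0) (volume.restrict (Set.Ioc 0 τ)) :=
    memLp_one_iff_integrable.mp hu01
  have hdiffint : Integrable (fun σ => u 0 σ - g σ) (volume.restrict (Set.Ioc 0 τ)) :=
    hu0int.sub hgint
  have hL1 : ∫ σ in Set.Ioc (0:ℝ) τ, ‖u 0 σ - g σ‖ ≤ η := by
    have h1 := integral_norm_eq_lintegral_enorm
      (f := fun σ => u 0 σ - g σ) (μ := volume.restrict (Set.Ioc 0 τ))
      hdiffint.aestronglyMeasurable
    rw [h1]
    apply ENNReal.toReal_le_of_le_ofReal hηpos.le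
    have h2 : (∫⁻ σ, ‖u 0 σ - g σ‖ₑ ∂(volume.restrict (Set.Ioc 0 τ)))
        = eLpNorm (u 0 - ⇑g) 1 (volume.restrict (Set.Ioc 0 τ)) := by
      rw [eLpNorm_one_eq_lintegral_enorm]
      rfl
    rw [h2]
    exact hg1.le
  obtain ⟨Cg, hCg⟩ := g.exists_forall_norm_le
  obtain ⟨δT, hδTdef⟩ : ∃ d : ℝ, d = δ / (8 * (τ + 1)) := ⟨_, rfl⟩
  have hδTpos : 0 < δT := by rw [hδTdef]; positivity
  obtain ⟨δu, hδudef⟩ : ∃ d : ℝ, d = δ / (8 * (‖B‖ + 1) * (τ + 1)) := ⟨_, rfl⟩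
  have hδupos : 0 < δu := by rw [hδudef]; positivity
  have hTKg : ∀ᶠ ε in nhdsWithin (0:ℝ) (Set.Ioi 0), ∀ x ∈ Set.range ⇑g,
      ∀ s ∈ Set.Icc (0:ℝ) τ, ‖T ε s (B x) - T 0 s (B x)‖ ≤ δT :=
    (Filter.eventually_all_finite g.finite_range).mpr (fun x _ => hTK (B x) δT hδTpos)
  have hδu' : ∀ᶠ ε in nhdsWithin (0:ℝ) (Set.Ioi 0),
      eLpNorm (fun t => u ε t - u 0 t) ⊤ (volume.restrict (Set.Ioi 0))
        < ENNReal.ofReal δu :=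
    hu_conv.eventually_lt_const (ENNReal.ofReal_pos.mpr hδupos)
  filter_upwards [hTKg, hδu', self_mem_nhdsWithin] with ε hTKg' hδu'' hεpos
  intro t ht
  obtain ⟨ht0, htτ⟩ := ht
  have hε' : (0:ℝ) ≤ ε := le_of_lt hεpos
  haveI := hμfin t
  have hu0m : AEStronglyMeasurable (u 0) (volume.restrict (Set.Ioi (0:ℝ))) :=
    (hu_mem 0 le_rfl).aestronglyMeasurable
  have huεm : AEStronglyMeasurable (u ε) (volume.restrict (Set.Ioi (0:ℝ))) :=
    (hu_mem ε hε').aestronglyMeasurable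
  have hgm : AEStronglyMeasurable (⇑g) (volume.restrict (Set.Ioi (0:ℝ))) :=
    g.stronglyMeasurable.aestronglyMeasurable
  have hu0b := hae_bound (u 0) (hu_mem 0 le_rfl).2.ne
  have huεb := hae_bound (u ε) (hu_mem ε hε').2.ne
  have hgb : ∀ᵐ σ ∂(volume.restrict (Set.Ioi (0:ℝ))), ‖g σ‖ ≤ Cg :=
    Filter.Eventually.of_forall hCg
  have hIF1 := hInt ε hε' (u ε) huεm _ huεb t ht0
  have hIF2 := hInt ε hε' (u 0) hu0m _ hu0b t ht0
  have hIF3 := hInt ε hε' (⇑g) hgm Cg hgb t ht0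
  have hIG2 := hInt 0 le_rfl (u 0) hu0m _ hu0b t ht0
  have hIG3 := hInt 0 le_rfl (⇑g) hgm Cg hgb t ht0
  rw [dist_eq_norm]
  have hsplit : (∫ σ in Set.Ioc 0 t, T 0 (t - σ) (B (u 0 σ)))
      - (∫ σ in Set.Ioc 0 t, T ε (t - σ) (B (u ε σ)))
      = ((∫ σ in Set.Ioc 0 t, T 0 (t - σ) (B (u 0 σ)))
          - (∫ σ in Set.Ioc 0 t, T 0 (t - σ) (B (g σ))))
        + ((∫ σ in Set.Ioc 0 t, T 0 (t - σ) (B (g σ)))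
          - (∫ σ in Set.Ioc 0 t, T ε (t - σ) (B (g σ))))
        + ((∫ σ in Set.Ioc 0 t, T ε (t - σ) (B (g σ)))
          - (∫ σ in Set.Ioc 0 t, T ε (t - σ) (B (u 0 σ))))
        + ((∫ σ in Set.Ioc 0 t, T ε (t - σ) (B (u 0 σ)))
          - (∫ σ in Set.Ioc 0 t, T ε (t - σ) (B (u ε σ)))) := by abel
  have hBd2 : ∀ ε'', 0 ≤ ε'' → ‖(∫ σ in Set.Ioc 0 t, T ε'' (t - σ) (B (u 0 σ)))
      - (∫ σ in Set.Ioc 0 t, T ε'' (t - σ) (B (g σ)))‖ ≤ ‖B‖ * η := by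
    intro ε'' hε''
    have hIa := hInt ε'' hε'' (u 0) hu0m _ hu0b t ht0
    have hIb' := hInt ε'' hε'' (⇑g) hgm Cg hgb t ht0
    rw [← integral_sub hIa hIb']
    refine (norm_integral_le_integral_norm _).trans ?_
    have hint2 : Integrable (fun σ => ‖B‖ * ‖u 0 σ - g σ‖)
        (volume.restrict (Set.Ioc 0 t)) :=
      ((hdiffint.mono_measure
        (Measure.restrict_mono (Set.Ioc_subset_Ioc_right htτ) le_rfl)).norm).const_mul ‖B‖
    have hmono : ∫ σ in Set.Ioc 0 t,
          ‖T ε'' (t - σ) (B (u 0 σ)) - T ε'' (t - σ) (B (g σ))‖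
        ≤ ∫ σ in Set.Ioc 0 t, ‖B‖ * ‖u 0 σ - g σ‖ := by
      refine integral_mono_ae ((hIa.sub hIb').norm) hint2 ?_
      filter_upwards [ae_restrict_mem measurableSet_Ioc] with σ hσ
      show ‖T ε'' (t - σ) (B (u 0 σ)) - T ε'' (t - σ) (B (g σ))‖ ≤ ‖B‖ * ‖u 0 σ - g σ‖
      rw [← map_sub, ← map_sub]
      calc ‖T ε'' (t - σ) (B (u 0 σ - g σ))‖ ≤ ‖B (u 0 σ - g σ)‖ :=
            hTle ε'' hε'' _ (by linarith [hσ.2]) _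
        _ ≤ ‖B‖ * ‖u 0 σ - g σ‖ := B.le_opNorm _
    refine hmono.trans ?_
    have henl : ∫ σ in Set.Ioc 0 t, ‖B‖ * ‖u 0 σ - g σ‖
        ≤ ∫ σ in Set.Ioc 0 τ, ‖B‖ * ‖u 0 σ - g σ‖ := by
      refine setIntegral_mono_set (hdiffint.norm.const_mul ‖B‖) ?_ ?_
      · filter_upwards with σ
        positivity
      · exact HasSubset.Subset.eventuallyLE (Set.Ioc_subset_Ioc_right htτ)
    refine henl.trans ?_
    rw [integral_const_mul]
    exact mul_le_mul_of_nonneg_left hL1 (norm_nonneg _)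
  have hμt : volume (Set.Ioc (0:ℝ) t) < ⊤ := by
    rw [Real.volume_Ioc]; exact ENNReal.ofReal_lt_top
  have hBd3 : ‖(∫ σ in Set.Ioc 0 t, T 0 (t - σ) (B (g σ)))
      - (∫ σ in Set.Ioc 0 t, T ε (t - σ) (B (g σ)))‖ ≤ δT * τ := by
    rw [← integral_sub hIG3 hIF3]
    have hptw : ∀ᵐ σ ∂(volume : Measure ℝ), σ ∈ Set.Ioc (0:ℝ) t →
        ‖T 0 (t - σ) (B (g σ)) - T ε (t - σ) (B (g σ))‖ ≤ δT := by
      refine Filter.Eventually.of_forall (fun σ hσ => ?_)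
      rw [norm_sub_rev]
      exact hTKg' (g σ) ⟨σ, rfl⟩ (t - σ) ⟨by linarith [hσ.2], by linarith [hσ.1]⟩
    have hb := norm_setIntegral_le_of_norm_le_const_ae' (C := δT) hμt hptw
    exact hb.trans (mul_le_mul_of_nonneg_left (hvol_le t ht0 htτ) hδTpos.le)
  have hBd1 : ‖(∫ σ in Set.Ioc 0 t, T ε (t - σ) (B (u 0 σ)))
      - (∫ σ in Set.Ioc 0 t, T ε (t - σ) (B (u ε σ)))‖ ≤ ‖B‖ * δu * τ := by
    rw [← integral_sub hIF2 hIF1]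
    have hd : ∀ᵐ σ ∂(volume.restrict (Set.Ioi (0:ℝ))), ‖u ε σ - u 0 σ‖ ≤ δu := by
      filter_upwards [ae_le_eLpNormEssSup (f := fun t => u ε t - u 0 t)] with σ h
      have h2 : ‖u ε σ - u 0 σ‖ₑ ≤ ENNReal.ofReal δu := by
        refine h.trans ?_
        rw [← eLpNorm_exponent_top]
        exact hδu''.le
      rw [← ofReal_norm] at h2
      exact (ENNReal.ofReal_le_ofReal_iff hδupos.le).mp h2
    have hglobal := (ae_restrict_iff' measurableSet_Ioi).mp hd
    have hptw : ∀ᵐ σ ∂(volume : Measure ℝ), σ ∈ Set.Ioc (0:ℝ) t →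
        ‖T ε (t - σ) (B (u 0 σ)) - T ε (t - σ) (B (u ε σ))‖ ≤ ‖B‖ * δu := by
      filter_upwards [hglobal] with σ h hσ
      rw [← map_sub, ← map_sub]
      calc ‖T ε (t - σ) (B (u 0 σ - u ε σ))‖ ≤ ‖B (u 0 σ - u ε σ)‖ :=
            hTle ε hε' _ (by linarith [hσ.2]) _
        _ ≤ ‖B‖ * ‖u 0 σ - u ε σ‖ := B.le_opNorm _
        _ ≤ ‖B‖ * δu := by
            rw [norm_sub_rev]
            exact mul_le_mul_of_nonneg_left (h hσ.1) (norm_nonneg _)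
    have hb := norm_setIntegral_le_of_norm_le_const_ae' (C := ‖B‖ * δu) hμt
      hptw
    exact hb.trans (mul_le_mul_of_nonneg_left (hvol_le t ht0 htτ) (by positivity))
  have hB0 : (0:ℝ) ≤ ‖B‖ := norm_nonneg _
  have k1 : ‖B‖ * η ≤ δ / 8 := by
    have hk : η * (8 * (‖B‖ + 1)) = δ := by
      rw [hηdef]; field_simp
    nlinarith [hηpos]
  have k2 : δT * τ ≤ δ / 8 := by
    have hk : δT * (8 * (τ + 1)) = δ := by
      rw [hδTdef]; field_simp
    nlinarith [hδTpos]
  have k3 : ‖B‖ * δu * τ ≤ δ / 8 := by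
    have hk : δu * (8 * (‖B‖ + 1) * (τ + 1)) = δ := by
      rw [hδudef]; field_simp
    nlinarith [hδupos, mul_pos hδupos hτ, mul_nonneg hB0 hδupos.le]
  have hBd2' := hBd2 ε hε'
  rw [norm_sub_rev] at hBd2'
  rw [hsplit]
  calc ‖((∫ σ in Set.Ioc 0 t, T 0 (t - σ) (B (u 0 σ)))
          - (∫ σ in Set.Ioc 0 t, T 0 (t - σ) (B (g σ))))
        + ((∫ σ in Set.Ioc 0 t, T 0 (t - σ) (B (g σ)))
          - (∫ σ in Set.Ioc 0 t, T ε (t - σ) (B (g σ))))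
        + ((∫ σ in Set.Ioc 0 t, T ε (t - σ) (B (g σ)))
          - (∫ σ in Set.Ioc 0 t, T ε (t - σ) (B (u 0 σ))))
        + ((∫ σ in Set.Ioc 0 t, T ε (t - σ) (B (u 0 σ)))
          - (∫ σ in Set.Ioc 0 t, T ε (t - σ) (B (u ε σ))))‖
      ≤ ‖((∫ σ in Set.Ioc 0 t, T 0 (t - σ) (B (u 0 σ)))
          - (∫ σ in Set.Ioc 0 t, T 0 (t - σ) (B (g σ))))
        + ((∫ σ in Set.Ioc 0 t, T 0 (t - σ) (B (g σ)))
          - (∫ σ in Set.Ioc 0 t, T ε (t - σ) (B (g σ))))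
        + ((∫ σ in Set.Ioc 0 t, T ε (t - σ) (B (g σ)))
          - (∫ σ in Set.Ioc 0 t, T ε (t - σ) (B (u 0 σ))))‖
        + ‖(∫ σ in Set.Ioc 0 t, T ε (t - σ) (B (u 0 σ)))
          - (∫ σ in Set.Ioc 0 t, T ε (t - σ) (B (u ε σ)))‖ := norm_add_le _ _
    _ ≤ ‖((∫ σ in Set.Ioc 0 t, T 0 (t - σ) (B (u 0 σ)))
          - (∫ σ in Set.Ioc 0 t, T 0 (t - σ) (B (g σ))))
        + ((∫ σ in Set.Ioc 0 t, T 0 (t - σ) (B (g σ)))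
          - (∫ σ in Set.Ioc 0 t, T ε (t - σ) (B (g σ))))‖
        + ‖(∫ σ in Set.Ioc 0 t, T ε (t - σ) (B (g σ)))
          - (∫ σ in Set.Ioc 0 t, T ε (t - σ) (B (u 0 σ)))‖
        + ‖(∫ σ in Set.Ioc 0 t, T ε (t - σ) (B (u 0 σ)))
          - (∫ σ in Set.Ioc 0 t, T ε (t - σ) (B (u ε σ)))‖ :=
        add_le_add_left (norm_add_le _ _) _
    _ ≤ ‖(∫ σ in Set.Ioc 0 t, T 0 (t - σ) (B (u 0 σ)))
          - (∫ σ in Set.Ioc 0 t, T 0 (t - σ) (B (g σ)))‖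
        + ‖(∫ σ in Set.Ioc 0 t, T 0 (t - σ) (B (g σ)))
          - (∫ σ in Set.Ioc 0 t, T ε (t - σ) (B (g σ)))‖
        + ‖(∫ σ in Set.Ioc 0 t, T ε (t - σ) (B (g σ)))
          - (∫ σ in Set.Ioc 0 t, T ε (t - σ) (B (u 0 σ)))‖
        + ‖(∫ σ in Set.Ioc 0 t, T ε (t - σ) (B (u 0 σ)))
          - (∫ σ in Set.Ioc 0 t, T ε (t - σ) (B (u ε σ)))‖ :=
        add_le_add_left (add_le_add_left (norm_add_le _ _) _) _
    _ ≤ ‖B‖ * η + δT * τ + ‖B‖ * η + ‖B‖ * δu * τ :=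
        add_le_add (add_le_add (add_le_add (hBd2 0 le_rfl) hBd3) hBd2') hBd1
    _ < δ := by linarith
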